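/- Let {μᵢ}_{i≤I} ⊂ Δ(Ω) and suppose two weight vectors {αᵢ} and {βᵢ} (each nonnegative, summing to 1) both satisfy ∑ᵢ αᵢμᵢ = ∑ᵢ βᵢμᵢ = μ₀, with α ≠ β. Let ρ = maxᵢ (βᵢ/αᵢ) over i with αᵢ > 0 (assume αᵢ > 0 for all i). Then ρ ≥ 1, the weights α*ᵢ = (αᵢ − βᵢ/ρ)/(1 − 1/ρ) are nonnegative and sum to 1 with ∑ᵢ α*ᵢ μᵢ = μ₀, and at least one α*ᵢ equals 0. Moreover the original splitting decomposes as a convex combination: α = (1 − 1/ρ)·α* + (1/ρ)·β. -/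

import Mathlib

/-- Two distinct weight systems over the same posteriors averaging to the same prior allow a
decomposition of the first as a convex combination of the second and a splitting with
strictly smaller support. -/
theorem stmt13 (N I : ℕ) (μ₀ : EuclideanSpace ℝ (Fin N))
    (μ : Fin I → EuclideanSpace ℝ (Fin N))
    (hμΔ : ∀ i, (∀ j, 0 ≤ μ i j) ∧ ∑ j, μ i j = 1)
    (α β : Fin I → ℝ) (hαpos : ∀ i, 0 < α i) (hβ : ∀ i, 0 ≤ β i)
    (hαsum : ∑ i, α i = 1) (hβsum : ∑ i, β i = 1)
    (hαavg : ∑ i, α i • μ i = μ₀) (hβavg : ∑ i, β i • μ i = μ₀)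
    (hne : α ≠ β)
    (ρ : ℝ) (hρub : ∀ i, β i / α i ≤ ρ) (hρmem : ∃ i, β i / α i = ρ) :
    1 ≤ ρ ∧
    (∀ i, 0 ≤ (α i - β i / ρ) / (1 - 1 / ρ)) ∧
    (∑ i, (α i - β i / ρ) / (1 - 1 / ρ)) = 1 ∧
    (∑ i, ((α i - β i / ρ) / (1 - 1 / ρ)) • μ i) = μ₀ ∧
    (∃ i, (α i - β i / ρ) / (1 - 1 / ρ) = 0) ∧
    (∀ i, α i = (1 - 1 / ρ) * ((α i - β i / ρ) / (1 - 1 / ρ)) + (1 / ρ) * β i) := by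
  -- ρ > 1
  have hle : ∀ i, β i ≤ ρ * α i := fun i => by
    have := hρub i
    have h := (div_le_iff₀ (hαpos i)).mp this
    linarith [h]
  have hρ1 : 1 < ρ := by
    by_contra h
    push_neg at h
    have hβle : ∀ i, β i ≤ α i := fun i => by
      have := hle i
      nlinarith [hαpos i]
    have heq : ∀ i ∈ Finset.univ, β i = α i := by
      intro i _
      by_contra hne2
      have hlt : β i < α i := lt_of_le_of_ne (hβle i) hne2
      have : ∑ j, β j < ∑ j, α j :=
        Finset.sum_lt_sum (fun j _ => hβle j) ⟨i, Finset.mem_univ i, hlt⟩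
      rw [hαsum, hβsum] at this; exact lt_irrefl 1 this
    exact hne (funext fun i => ((heq i (Finset.mem_univ i))).symm)
  have hρ0 : 0 < ρ := by linarith
  have hc : 0 < 1 - 1 / ρ := by
    have : 1 / ρ < 1 := by rw [div_lt_one hρ0]; exact hρ1
    linarith
  have hnum : ∀ i, 0 ≤ α i - β i / ρ := fun i => by
    have := hle i
    have : β i / ρ ≤ α i := (div_le_iff₀ hρ0).mpr (by linarith)
    linarith
  have hρne : ρ ≠ 0 := ne_of_gt hρ0
  have hcne : (1 : ℝ) - 1 / ρ ≠ 0 := ne_of_gt hc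
  have hρ1ne : ρ - 1 ≠ 0 := by linarith
  refine ⟨le_of_lt hρ1, fun i => div_nonneg (hnum i) hc.le, ?_, ?_, ?_, ?_⟩
  · rw [← Finset.sum_div]
    rw [Finset.sum_sub_distrib, ← Finset.sum_div, hαsum, hβsum]
    field_simp
  · have : ∀ i, ((α i - β i / ρ) / (1 - 1 / ρ)) • μ i
        = (1 - 1/ρ)⁻¹ • (α i • μ i) - ((1 - 1/ρ)⁻¹ * ρ⁻¹) • (β i • μ i) := by
      intro i
      rw [smul_smul, smul_smul, ← sub_smul]
      congr 1
      field_simp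
    rw [Finset.sum_congr rfl (fun i _ => this i), Finset.sum_sub_distrib,
      ← Finset.smul_sum, ← Finset.smul_sum, hαavg, hβavg, ← sub_smul]
    have hcoef : (1 - 1/ρ)⁻¹ - (1 - 1/ρ)⁻¹ * ρ⁻¹ = 1 := by
      field_simp
    rw [hcoef, one_smul]
  · obtain ⟨i, hi⟩ := hρmem
    refine ⟨i, ?_⟩
    have : β i = ρ * α i := by
      have := (div_eq_iff (ne_of_gt (hαpos i))).mp hi
      linarith
    have h0 : α i - β i / ρ = 0 := by
      rw [this]; field_simp; ring
    rw [h0, zero_div]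
  · intro i
    field_simp
    ring
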